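/- LCP violates strategy-proofness, arithmetic verification: For d_1 = (1/2, 1), d_2 = (1, 1/6) with unit work each, the minimizer of (1/x)(1 − y/x + 1/x) subject to x/2 + y ≤ 1 and x + y/6 ≤ 1 (x, y > 0) is x = 10/11, y = 6/11, giving agent 1 cost 11/10; whereas for the misreported demand d_1' = (2/3, 1), the minimizer of the same objective subject to 2x/3 + y ≤ 1 and x + y/6 ≤ 1 is x = 15/16, y = 3/8, and with this allocation agent 1's true completion time is 16/15 < 11/10. -/

import Mathlib

/-- arithmetic verification that LCP violates strategy-proofness.
Under truthful demands the constrained minimizer is (10/11, 6/11) giving agent 1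
cost 11/10; under the misreport the minimizer is (15/16, 3/8) and agent 1's true
completion time is 16/15 < 11/10. -/
theorem stmt_19 :
    -- truthful problem: minimizer (10/11, 6/11)
    (((10:ℝ)/11 > 0 ∧ (6:ℝ)/11 > 0 ∧
        (10:ℝ)/11/2 + 6/11 ≤ 1 ∧ (10:ℝ)/11 + (6/11)/6 ≤ 1) ∧
      (∀ x y : ℝ, 0 < x → 0 < y → x / 2 + y ≤ 1 → x + y / 6 ≤ 1 →
        (1 / ((10:ℝ)/11)) * (1 - ((6:ℝ)/11) / (10/11) + 1 / (10/11)) ≤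
          (1 / x) * (1 - y / x + 1 / x)) ∧
      1 / ((10:ℝ)/11) = 11/10) ∧
    -- misreported problem: minimizer (15/16, 3/8)
    (((15:ℝ)/16 > 0 ∧ (3:ℝ)/8 > 0 ∧
        2 * ((15:ℝ)/16) / 3 + 3/8 ≤ 1 ∧ (15:ℝ)/16 + (3/8)/6 ≤ 1) ∧
      (∀ x y : ℝ, 0 < x → 0 < y → 2 * x / 3 + y ≤ 1 → x + y / 6 ≤ 1 →
        (1 / ((15:ℝ)/16)) * (1 - ((3:ℝ)/8) / (15/16) + 1 / (15/16)) ≤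
          (1 / x) * (1 - y / x + 1 / x)) ∧
      1 / ((15:ℝ)/16) = 16/15) ∧
    (16:ℝ)/15 < 11/10 := by
  refine ⟨⟨⟨by norm_num, by norm_num, by norm_num, by norm_num⟩, ?_, by norm_num⟩,
    ⟨⟨by norm_num, by norm_num, by norm_num, by norm_num⟩, ?_, by norm_num⟩, by norm_num⟩
  · intro x y hx hy h1 h2
    have hx2 : (0:ℝ) < x ^ 2 := by positivity
    have hobj : (1 / x) * (1 - y / x + 1 / x) = (x - y + 1) / x ^ 2 := by
      rw [eq_div_iff hx2.ne']; field_simp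
    rw [hobj]
    have hval : (1 / ((10:ℝ)/11)) * (1 - ((6:ℝ)/11) / (10/11) + 1 / (10/11)) = 33/20 := by
      norm_num
    rw [hval, div_le_div_iff₀ (by norm_num) hx2]
    rcases le_or_gt x (10/11) with h | h
    · nlinarith [mul_nonneg hx.le (sub_nonneg.mpr h)]
    · nlinarith [sq_nonneg (x - 10/11)]
  · intro x y hx hy h1 h2
    have hx2 : (0:ℝ) < x ^ 2 := by positivity
    have hobj : (1 / x) * (1 - y / x + 1 / x) = (x - y + 1) / x ^ 2 := by
      rw [eq_div_iff hx2.ne']; field_simp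
    rw [hobj]
    have hval : (1 / ((15:ℝ)/16)) * (1 - ((3:ℝ)/8) / (15/16) + 1 / (15/16)) = 16/9 := by
      norm_num
    rw [hval, div_le_div_iff₀ (by norm_num) hx2]
    rcases le_or_gt x (15/16) with h | h
    · nlinarith [mul_nonneg hx.le (sub_nonneg.mpr h)]
    · nlinarith [sq_nonneg (x - 15/16)]
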